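/- arXiv:1703.05800 — 4 statements merged into one kernel-verified Lean document; each statement's English description precedes it below -/
import Mathlib

section
/- Let β > 0, ε > 0, and let E : {1,…,d} → ℝ, e : {1,…,d'} → ℝ and c : {1,…,d} → {1,…,d'} satisfy |E_j − e_{c(j)}| ≤ ε for all j. Define Z = ∑_{j=1}^{d} e^{−βE_j}, Z̃ = ∑_{j=1}^{d} e^{−βe_{c(j)}}, and the probability distributions p(j) = e^{−βE_j}/Z and q(j) = e^{−βe_{c(j)}}/Z̃ on {1,…,d}. Then ∑_{j=1}^{d} |p(j) − q(j)| ≤ √(4εβ). -/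
lemma lumped_exp_aux (a : ℝ) (ha : 0 < a) (ha1 : a < 1) :
    (1 - a) * (Real.exp (-(a/2)) + Real.exp (a/2)) ^ 2 ≤ 4 := by
  set m : ℝ := Real.exp (-(a/2)) with hm_def
  set M : ℝ := Real.exp (a/2) with hM_def
  have hmM : m * M = 1 := by rw [hm_def, hM_def, ← Real.exp_add]; simp
  have hMM : M ^ 2 = Real.exp a := by rw [hM_def, sq, ← Real.exp_add]; ring_nf
  have hmm : m ^ 2 = Real.exp (-a) := by rw [hm_def, sq, ← Real.exp_add]; ring_nf
  set u : ℝ := Real.exp a with hu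
  set v : ℝ := Real.exp (-a) with hv
  have huv : u * v = 1 := by rw [hu, hv, ← Real.exp_add]; simp
  have hupos : 0 < u := Real.exp_pos _
  have hvpos : 0 < v := Real.exp_pos _
  have hu1 : 1 + a ≤ u := by
    have := Real.add_one_le_exp a; rw [← hu] at this; linarith
  have hv1 : 1 - a ≤ v := by
    have := Real.add_one_le_exp (-a); rw [← hv] at this; linarith
  have hineq : u - 1 ≤ a * u := by
    have h5 : u * (1 - a) ≤ u * v := mul_le_mul_of_nonneg_left hv1 hupos.le
    rw [huv] at h5; nlinarith [h5]
  have hexp : (m + M) ^ 2 = u + v + 2 := by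
    have h : (m + M) ^ 2 = m ^ 2 + M ^ 2 + 2 * (m * M) := by ring
    rw [h, hmm, hMM, hmM]; ring
  rw [hexp]
  have key : (u - 1) ^ 2 ≤ a * (u + 1) ^ 2 := by nlinarith
  have key2 : (1 - a) * (u + 1) ^ 2 ≤ 4 * u := by nlinarith [key]
  have hid : (u + 1) ^ 2 * v = u + v + 2 := by linear_combination (u + 2) * huv
  have hmul := mul_le_mul_of_nonneg_right key2 hvpos.le
  calc (1 - a) * (u + v + 2) = (1 - a) * (u + 1) ^ 2 * v := by rw [mul_assoc, hid]
    _ ≤ 4 * u * v := hmul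
    _ = 4 := by rw [mul_assoc, huv]; ring

lemma lumped_sq_aux (a B C : ℝ) (hC : 0 < C) (hB : 0 ≤ B)
    (h2 : 2 ≤ C * B) (h4 : (1 - a) * C ^ 2 ≤ 4) : 1 - a ≤ B ^ 2 := by
  nlinarith [sq_nonneg (C * B - 2), mul_pos hC hC, h2, h4]


/-- **Theorem (lumping eigenvalues, trace-distance bound).** If each eigenvalue `E j` is within
`ε` of its lumped value `e (c j)`, then the Gibbs distribution `p` and the lumped Gibbs
distribution `q` satisfy `‖p - q‖₁ ≤ √(4 ε β)`. -/
theorem lumped_gibbs_total_variation_bound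
    {d d' : ℕ} (β ε : ℝ) (hβ : 0 < β) (hε : 0 < ε)
    (E : Fin d → ℝ) (e : Fin d' → ℝ) (c : Fin d → Fin d')
    (hclose : ∀ j, |E j - e (c j)| ≤ ε)
    (Z Zt : ℝ)
    (hZ : Z = ∑ j, Real.exp (-β * E j))
    (hZt : Zt = ∑ j, Real.exp (-β * e (c j)))
    (p q : Fin d → ℝ)
    (hp : ∀ j, p j = Real.exp (-β * E j) / Z)
    (hq : ∀ j, q j = Real.exp (-β * e (c j)) / Zt) :
    ∑ j, |p j - q j| ≤ Real.sqrt (4 * ε * β) := by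
  rcases Nat.eq_zero_or_pos d with hd | hd
  · subst hd; simp [Real.sqrt_nonneg]
  have hne : (Finset.univ : Finset (Fin d)).Nonempty := by
    simpa [Finset.univ_nonempty_iff] using Fin.pos_iff_nonempty.mp hd
  set a : ℝ := ε * β with ha_def
  have ha : 0 < a := mul_pos hε hβ
  set s : Fin d → ℝ := fun j => Real.exp (-β * E j) with hs_def
  set t : Fin d → ℝ := fun j => Real.exp (-β * e (c j)) with ht_def
  have hspos : ∀ j, 0 < s j := fun j => Real.exp_pos _
  have htpos : ∀ j, 0 < t j := fun j => Real.exp_pos _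
  have hZpos : 0 < Z := by
    rw [hZ]; exact Finset.sum_pos (fun j _ => Real.exp_pos _) hne
  have hZtpos : 0 < Zt := by
    rw [hZt]; exact Finset.sum_pos (fun j _ => Real.exp_pos _) hne
  -- ratio bounds
  have hupper : ∀ j, t j ≤ Real.exp a * s j := by
    intro j
    have h1 : E j - e (c j) ≤ ε := (abs_le.mp (hclose j)).2
    have h2 : -β * e (c j) ≤ a + (-β * E j) := by
      have := mul_le_mul_of_nonneg_left h1 hβ.le
      nlinarith
    calc t j = Real.exp (-β * e (c j)) := rfl
      _ ≤ Real.exp (a + (-β * E j)) := Real.exp_le_exp.mpr h2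
      _ = Real.exp a * s j := by rw [Real.exp_add]
  have hlower : ∀ j, Real.exp (-a) * s j ≤ t j := by
    intro j
    have h1 : -ε ≤ E j - e (c j) := (abs_le.mp (hclose j)).1
    have h2 : (-a) + (-β * E j) ≤ -β * e (c j) := by
      have := mul_le_mul_of_nonneg_left h1 hβ.le
      nlinarith
    calc Real.exp (-a) * s j = Real.exp ((-a) + (-β * E j)) := by rw [Real.exp_add]
      _ ≤ Real.exp (-β * e (c j)) := Real.exp_le_exp.mpr h2
      _ = t j := rfl
  -- square roots
  set x : Fin d → ℝ := fun j => Real.sqrt (s j) / Real.sqrt Z with hx_def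
  set y : Fin d → ℝ := fun j => Real.sqrt (t j) / Real.sqrt Zt with hy_def
  have hxnn : ∀ j, 0 ≤ x j := fun j => div_nonneg (Real.sqrt_nonneg _) (Real.sqrt_nonneg _)
  have hynn : ∀ j, 0 ≤ y j := fun j => div_nonneg (Real.sqrt_nonneg _) (Real.sqrt_nonneg _)
  have hx2 : ∀ j, x j ^ 2 = s j / Z := by
    intro j
    rw [hx_def]
    rw [div_pow, Real.sq_sqrt (hspos j).le, Real.sq_sqrt hZpos.le]
  have hy2 : ∀ j, y j ^ 2 = t j / Zt := by
    intro j
    rw [hy_def]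
    rw [div_pow, Real.sq_sqrt (htpos j).le, Real.sq_sqrt hZtpos.le]
  have hsumx2 : ∑ j, x j ^ 2 = 1 := by
    simp_rw [hx2]
    rw [← Finset.sum_div, ← hZ, div_self hZpos.ne']
  have hsumy2 : ∑ j, y j ^ 2 = 1 := by
    simp_rw [hy2]
    rw [← Finset.sum_div, ← hZt, div_self hZtpos.ne']
  set B : ℝ := ∑ j, x j * y j with hB_def
  have hBnn : 0 ≤ B := Finset.sum_nonneg fun j _ => mul_nonneg (hxnn j) (hynn j)
  -- lower bound on B
  have hBlow : 1 - a ≤ B ^ 2 := by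
    rcases le_or_gt 1 a with h1a | h1a
    · nlinarith [sq_nonneg B]
    set m : ℝ := Real.exp (-(a/2)) with hm_def
    set M : ℝ := Real.exp (a/2) with hM_def
    have hmM : m * M = 1 := by rw [hm_def, hM_def, ← Real.exp_add]; simp
    have hmpos : 0 < m := Real.exp_pos _
    have hMpos : 0 < M := Real.exp_pos _
    have hMM : M ^ 2 = Real.exp a := by
      rw [hM_def, sq, ← Real.exp_add]; ring_nf
    have hmm : m ^ 2 = Real.exp (-a) := by
      rw [hm_def, sq, ← Real.exp_add]; ring_nf
    have hkey : ∀ j, s j + t j ≤ (m + M) * (Real.sqrt (s j) * Real.sqrt (t j)) := by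
      intro j
      set S := Real.sqrt (s j) with hS
      set T := Real.sqrt (t j) with hT
      have hS2 : S ^ 2 = s j := Real.sq_sqrt (hspos j).le
      have hT2 : T ^ 2 = t j := Real.sq_sqrt (htpos j).le
      have hSpos : 0 < S := Real.sqrt_pos.mpr (hspos j)
      have hTpos : 0 < T := Real.sqrt_pos.mpr (htpos j)
      have hub : T ≤ M * S := by
        have h : t j ≤ M ^ 2 * s j := by rw [hMM]; exact hupper j
        calc T ≤ Real.sqrt (M ^ 2 * s j) := Real.sqrt_le_sqrt h
          _ = M * S := by
              rw [Real.sqrt_mul (sq_nonneg M), Real.sqrt_sq hMpos.le]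
      have hlb : m * S ≤ T := by
        have h : m ^ 2 * s j ≤ t j := by rw [hmm]; exact hlower j
        calc m * S = Real.sqrt (m ^ 2 * s j) := by
              rw [Real.sqrt_mul (sq_nonneg m), Real.sqrt_sq hmpos.le]
          _ ≤ T := Real.sqrt_le_sqrt h
      nlinarith [mul_nonneg (sub_nonneg.mpr hub) (sub_nonneg.mpr hlb)]
    set G : ℝ := ∑ j, Real.sqrt (s j) * Real.sqrt (t j) with hG_def
    have hGsum : Z + Zt ≤ (m + M) * G := by
      rw [hG_def, Finset.mul_sum, hZ, hZt, ← Finset.sum_add_distrib]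
      exact Finset.sum_le_sum fun j _ => hkey j
    have hBG : B = G / (Real.sqrt Z * Real.sqrt Zt) := by
      rw [hB_def, hG_def, Finset.sum_div]
      congr 1; funext j
      rw [hx_def, hy_def]
      ring
    have hZZt : 2 * (Real.sqrt Z * Real.sqrt Zt) ≤ Z + Zt := by
      nlinarith [sq_nonneg (Real.sqrt Z - Real.sqrt Zt), Real.sq_sqrt hZpos.le,
        Real.sq_sqrt hZtpos.le]
    have hsqpos : 0 < Real.sqrt Z * Real.sqrt Zt :=
      mul_pos (Real.sqrt_pos.mpr hZpos) (Real.sqrt_pos.mpr hZtpos)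
    have hB2C : 2 ≤ (m + M) * B := by
      rw [hBG, ← mul_div_assoc, le_div_iff₀ hsqpos]
      linarith
    have hC2 : (1 - a) * (m + M) ^ 2 ≤ 4 := by
      rw [hm_def, hM_def]; exact lumped_exp_aux a ha h1a
    have hCpos : 0 < m + M := by positivity
    exact lumped_sq_aux a B (m + M) hCpos hBnn hB2C hC2
  -- Cauchy-Schwarz
  have hpq : ∀ j, |p j - q j| = |x j - y j| * (x j + y j) := by
    intro j
    have h : p j - q j = x j ^ 2 - y j ^ 2 := by
      rw [hp, hq, hx2, hy2]
    rw [h, sq_sub_sq, abs_mul,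
      abs_of_nonneg (by positivity : (0:ℝ) ≤ x j + y j), mul_comm]
  have h1 : ∑ j, (x j - y j) ^ 2 = 2 - 2 * B := by
    have h : ∀ j, (x j - y j) ^ 2 = x j ^ 2 + y j ^ 2 - 2 * (x j * y j) := fun j => by ring
    simp_rw [h]
    rw [Finset.sum_sub_distrib, Finset.sum_add_distrib, hsumx2, hsumy2,
      ← Finset.mul_sum, ← hB_def]
    norm_num
  have h2 : ∑ j, (x j + y j) ^ 2 = 2 + 2 * B := by
    have h : ∀ j, (x j + y j) ^ 2 = x j ^ 2 + y j ^ 2 + 2 * (x j * y j) := fun j => by ring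
    simp_rw [h]
    rw [Finset.sum_add_distrib, Finset.sum_add_distrib, hsumx2, hsumy2,
      ← Finset.mul_sum, ← hB_def]
    norm_num
  have hL2 : (∑ j, |p j - q j|) ^ 2 ≤ (2 - 2 * B) * (2 + 2 * B) := by
    calc (∑ j, |p j - q j|) ^ 2 = (∑ j, |x j - y j| * (x j + y j)) ^ 2 := by
          simp_rw [hpq]
      _ ≤ (∑ j, |x j - y j| ^ 2) * ∑ j, (x j + y j) ^ 2 :=
          Finset.sum_mul_sq_le_sq_mul_sq _ _ _
      _ = (∑ j, (x j - y j) ^ 2) * ∑ j, (x j + y j) ^ 2 := by simp_rw [sq_abs]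
      _ = (2 - 2 * B) * (2 + 2 * B) := by rw [h1, h2]
  have hLnn : 0 ≤ ∑ j, |p j - q j| := Finset.sum_nonneg fun j _ => abs_nonneg _
  have hfin : (∑ j, |p j - q j|) ^ 2 ≤ 4 * ε * β := by
    have h : (2 - 2 * B) * (2 + 2 * B) = 4 - 4 * B ^ 2 := by ring
    rw [h] at hL2
    have h4 : 4 * ε * β = 4 * a := by rw [ha_def]; ring
    rw [h4]
    nlinarith [hBlow, hL2]
  calc ∑ j, |p j - q j| = Real.sqrt ((∑ j, |p j - q j|) ^ 2) := (Real.sqrt_sq hLnn).symm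
    _ ≤ Real.sqrt (4 * ε * β) := Real.sqrt_le_sqrt hfin
end

section
/- Let H ∈ M_d(ℂ) be Hermitian with spectral decomposition H = ∑_{i=1}^{d'} E_i P_i, where P_1,…,P_{d'} are nonzero pairwise orthogonal Hermitian projections summing to the identity, and let β > 0. Let σ = e^{−βH}/Tr(e^{−βH}) be the Gibbs state, define the pinching-average channel Q(X) = ∑_{i=1}^{d'} (Tr(P_i X)/Tr(P_i)) P_i and the map T_∞(X) = Tr(X) σ. Let T, T' : M_d(ℂ) → M_d(ℂ) be linear trace-preserving maps such that: T(σ) = σ; Q∘T∘Q = T∘Q; ‖T − T_∞‖_{1→1} < 1; and ‖T − T'‖_{1→1} ≤ ε. Let κ(T) = sup { ‖(id − T + T_∞)⁻¹(X)‖₁ / ‖X‖₁ : X ∈ M_d(ℂ), X ≠ 0, Tr(X) = 0 }. Let ρ ∈ M_d(ℂ) be a density matrix (positive semidefinite with trace 1) satisfying (Q∘T'∘Q)(ρ) = ρ, and let {F_m}_{m∈I} be a finite POVM (each F_m positive semidefinite with ∑_m F_m = 1). Then the probability distributions p(m) = Tr(F_m σ) and p'(m) = Tr(F_m ρ) satisfy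 ∑_{m∈I} |p(m) − p'(m)| ≤ (κ(T) + 2) ε. -/
open Matrix
open scoped ComplexOrder

/-- The trace norm `‖A‖₁ = Tr √(A* A)` of a complex matrix. -/
noncomputable def traceNorm {d : ℕ} (A : Matrix (Fin d) (Fin d) ℂ) : ℝ :=
  (((Matrix.posSemidef_conjTranspose_mul_self A).1.eigenvectorUnitary : Matrix (Fin d) (Fin d) ℂ) *
      diagonal (((↑) : ℝ → ℂ) ∘ Real.sqrt ∘ (Matrix.posSemidef_conjTranspose_mul_self A).1.eigenvalues) *
      (star (Matrix.posSemidef_conjTranspose_mul_self A).1.eigenvectorUnitary :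
        Matrix (Fin d) (Fin d) ℂ)).trace.re

/-- The `1 → 1` norm of a map on matrices, induced by the trace norm. -/
noncomputable def oneToOneNorm {d : ℕ}
    (g : Matrix (Fin d) (Fin d) ℂ → Matrix (Fin d) (Fin d) ℂ) : ℝ :=
  sSup {r : ℝ | ∃ X, X ≠ 0 ∧ r = traceNorm (g X) / traceNorm X}

namespace StabAux

variable {d : ℕ}

/-- real diagonal as complex diagonal -/
noncomputable abbrev Dg {d : ℕ} (c : Fin d → ℝ) : Matrix (Fin d) (Fin d) ℂ :=
  diagonal (fun i => (c i : ℂ))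

lemma herm_trace_re {A : Matrix (Fin d) (Fin d) ℂ} (hA : A.IsHermitian) :
    A.trace = (A.trace.re : ℂ) := by
  have h := Matrix.trace_conjTranspose A
  rw [hA.eq] at h
  exact (Complex.conj_eq_iff_re.mp h.symm).symm

lemma psd_trace_nonneg {A : Matrix (Fin d) (Fin d) ℂ} (hA : A.PosSemidef) :
    0 ≤ A.trace.re := by
  have htr : A.trace = ∑ i, A i i := rfl
  rw [htr, Complex.re_sum]
  refine Finset.sum_nonneg fun i _ => ?_
  have h := hA.dotProduct_mulVec_nonneg (Pi.single i 1)
  have he : dotProduct (star (Pi.single i 1)) (A *ᵥ Pi.single i 1) = A i i := by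
    have h1 : A *ᵥ Pi.single i 1 = fun k => A k i := by
      funext k; simp [Matrix.mulVec_single]
    rw [h1]
    simp [dotProduct, Pi.single_apply, apply_ite (star : ℂ → ℂ), ite_mul, one_mul,
      zero_mul, Finset.sum_ite_eq']
  rw [he] at h
  exact (Complex.le_def.mp h).1

section UDU

variable {W : Matrix (Fin d) (Fin d) ℂ} (hW1 : W * Wᴴ = 1) (hW2 : Wᴴ * W = 1)

lemma udu_conjT (c : Fin d → ℝ) : (W * Dg c * Wᴴ)ᴴ = W * Dg c * Wᴴ := by
  have : (Dg c)ᴴ = Dg c := by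
    rw [Matrix.diagonal_conjTranspose]
    have h2 : (star fun i => ((c i : ℝ) : ℂ)) = fun i => ((c i : ℝ) : ℂ) := by
      funext i; simp [Complex.conj_ofReal]
    rw [h2]
  simp only [Matrix.conjTranspose_mul, Matrix.conjTranspose_conjTranspose, this]
  rw [Matrix.mul_assoc]

include hW2 in
lemma udu_mul (c c' : Fin d → ℝ) :
    (W * Dg c * Wᴴ) * (W * Dg c' * Wᴴ) = W * Dg (fun i => c i * c' i) * Wᴴ := by
  have : (W * Dg c * Wᴴ) * (W * Dg c' * Wᴴ) = W * (Dg c * (Wᴴ * W) * Dg c') * Wᴴ := by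
    simp only [Matrix.mul_assoc]
  rw [this, hW2, Matrix.mul_one, Matrix.diagonal_mul_diagonal]
  have hfun : (fun i => ((c i : ℂ) * (c' i : ℂ))) = fun i => ((c i * c' i : ℝ) : ℂ) := by
    funext i; push_cast; ring
  rw [hfun]

include hW2 in
lemma udu_trace (c : Fin d → ℝ) : (W * Dg c * Wᴴ).trace = ((∑ i, c i : ℝ) : ℂ) := by
  rw [Matrix.trace_mul_cycle, hW2, Matrix.one_mul, Matrix.trace_diagonal, Complex.ofReal_sum]

lemma udu_psd {c : Fin d → ℝ} (hc : ∀ i, 0 ≤ c i) : (W * Dg c * Wᴴ).PosSemidef := by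
  have h : (Dg c).PosSemidef := Matrix.posSemidef_diagonal_iff.mpr fun i =>
    Complex.zero_le_real.mpr (hc i)
  exact h.mul_mul_conjTranspose_same W

/-- the square root of `Aᴴ * A` used in `traceNorm` -/
noncomputable abbrev sqrtM {d : ℕ} (A : Matrix (Fin d) (Fin d) ℂ) : Matrix (Fin d) (Fin d) ℂ :=
  ((Matrix.posSemidef_conjTranspose_mul_self A).1.eigenvectorUnitary : Matrix (Fin d) (Fin d) ℂ) *
      diagonal (((↑) : ℝ → ℂ) ∘ Real.sqrt ∘ (Matrix.posSemidef_conjTranspose_mul_self A).1.eigenvalues) *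
      (star (Matrix.posSemidef_conjTranspose_mul_self A).1.eigenvectorUnitary :
        Matrix (Fin d) (Fin d) ℂ)

lemma traceNorm_eq (A : Matrix (Fin d) (Fin d) ℂ) : traceNorm A = (sqrtM A).trace.re := rfl

lemma sqrtM_psd (A : Matrix (Fin d) (Fin d) ℂ) : (sqrtM A).PosSemidef :=
  udu_psd (W := ((Matrix.posSemidef_conjTranspose_mul_self A).1.eigenvectorUnitary :
    Matrix (Fin d) (Fin d) ℂ)) (c := fun i => Real.sqrt
      ((Matrix.posSemidef_conjTranspose_mul_self A).1.eigenvalues i)) fun i => Real.sqrt_nonneg _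

lemma sqrtM_sq (A : Matrix (Fin d) (Fin d) ℂ) : sqrtM A ^ 2 = Aᴴ * A := by
  have hA := Matrix.posSemidef_conjTranspose_mul_self A
  have hU2 : (hA.1.eigenvectorUnitary : Matrix (Fin d) (Fin d) ℂ)ᴴ *
      (hA.1.eigenvectorUnitary : Matrix (Fin d) (Fin d) ℂ) = 1 := by
    have := hA.1.eigenvectorUnitary.2.1
    simpa [Matrix.star_eq_conjTranspose] using this
  show ((hA.1.eigenvectorUnitary : Matrix (Fin d) (Fin d) ℂ) *
      Dg (fun i => Real.sqrt (hA.1.eigenvalues i)) *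
      (hA.1.eigenvectorUnitary : Matrix (Fin d) (Fin d) ℂ)ᴴ) ^ 2 = Aᴴ * A
  rw [pow_two, udu_mul hU2]
  have hf : (fun i => Real.sqrt (hA.1.eigenvalues i) * Real.sqrt (hA.1.eigenvalues i)) =
      hA.1.eigenvalues := funext fun i => Real.mul_self_sqrt (hA.eigenvalues_nonneg i)
  rw [hf]
  exact hA.1.spectral_theorem.symm

open scoped MatrixOrder in
lemma eq_sqrtM {A B : Matrix (Fin d) (Fin d) ℂ} (hB : B.PosSemidef) (h : B ^ 2 = Aᴴ * A) :
    B = sqrtM A := by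
  have h1 : CFC.sqrt (Aᴴ * A) = B :=
    CFC.sqrt_unique (by rw [← h, pow_two]) (Matrix.nonneg_iff_posSemidef.mpr hB)
  have h2 : CFC.sqrt (Aᴴ * A) = sqrtM A :=
    CFC.sqrt_unique (by rw [← pow_two, sqrtM_sq]) (Matrix.nonneg_iff_posSemidef.mpr (sqrtM_psd A))
  rw [← h1, h2]

include hW2 in
lemma udu_traceNorm (c : Fin d → ℝ) : traceNorm (W * Dg c * Wᴴ) = ∑ i, |c i| := by
  set A := W * Dg c * Wᴴ with hA
  have hAH : Aᴴ = A := udu_conjT c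
  have hsq : (W * Dg (fun i => |c i|) * Wᴴ) ^ 2 = Aᴴ * A := by
    have hfun : (fun i => |c i| * |c i|) = fun i => c i * c i := by
      funext i; exact abs_mul_abs_self _
    rw [hAH, pow_two, hA, udu_mul hW2, udu_mul hW2, hfun]
  have hB : (W * Dg (fun i => |c i|) * Wᴴ).PosSemidef := udu_psd fun i => abs_nonneg _
  have heq := eq_sqrtM hB hsq
  rw [traceNorm_eq, ← heq, udu_trace hW2]
  rw [Complex.ofReal_re]

end UDU

lemma herm_udu {A : Matrix (Fin d) (Fin d) ℂ} (hA : A.IsHermitian) :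
    ∃ W c, W * Wᴴ = 1 ∧ Wᴴ * W = 1 ∧ A = W * Dg c * Wᴴ := by
  refine ⟨hA.eigenvectorUnitary, hA.eigenvalues, ?_, ?_, ?_⟩
  · have := hA.eigenvectorUnitary.2.2
    simpa [Matrix.star_eq_conjTranspose] using this
  · have := hA.eigenvectorUnitary.2.1
    simpa [Matrix.star_eq_conjTranspose] using this
  · have := hA.spectral_theorem
    exact this

lemma psd_udu {A : Matrix (Fin d) (Fin d) ℂ} (hA : A.PosSemidef) :
    ∃ W c, W * Wᴴ = 1 ∧ Wᴴ * W = 1 ∧ (∀ i, 0 ≤ c i) ∧ A = W * Dg c * Wᴴ := by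
  refine ⟨hA.1.eigenvectorUnitary, hA.1.eigenvalues, ?_, ?_, hA.eigenvalues_nonneg, ?_⟩
  · have := hA.1.eigenvectorUnitary.2.2
    simpa [Matrix.star_eq_conjTranspose] using this
  · have := hA.1.eigenvectorUnitary.2.1
    simpa [Matrix.star_eq_conjTranspose] using this
  · have := hA.1.spectral_theorem
    exact this

lemma traceNorm_nonneg (A : Matrix (Fin d) (Fin d) ℂ) : 0 ≤ traceNorm A :=
  psd_trace_nonneg (sqrtM_psd A)

lemma traceNorm_psd {A : Matrix (Fin d) (Fin d) ℂ} (hA : A.PosSemidef) :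
    traceNorm A = A.trace.re := by
  have h : A = sqrtM A :=
    eq_sqrtM hA (by rw [pow_two, hA.1.eq])
  rw [traceNorm_eq, ← h]

lemma traceNorm_zero : traceNorm (0 : Matrix (Fin d) (Fin d) ℂ) = 0 := by
  rw [traceNorm_psd Matrix.PosSemidef.zero]
  simp

end StabAux
namespace StabAux

variable {d : ℕ}

/-- Matrices as a Euclidean space (Frobenius norm). -/
noncomputable def eucM (d : ℕ) :
    Matrix (Fin d) (Fin d) ℂ ≃ₗ[ℂ] EuclideanSpace ℂ (Fin d × Fin d) :=
  ((LinearEquiv.curry ℂ ℂ (Fin d) (Fin d)).symm :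
      Matrix (Fin d) (Fin d) ℂ ≃ₗ[ℂ] (Fin d × Fin d → ℂ)).trans
    (WithLp.linearEquiv 2 ℂ (Fin d × Fin d → ℂ)).symm

lemma eucM_apply (X : Matrix (Fin d) (Fin d) ℂ) (p : Fin d × Fin d) :
    eucM d X p = X p.1 p.2 := rfl

lemma norm_eucM_sq (X : Matrix (Fin d) (Fin d) ℂ) :
    ‖eucM d X‖ ^ 2 = (Xᴴ * X).trace.re := by
  have h1 : ‖eucM d X‖ = Real.sqrt (∑ p : Fin d × Fin d, ‖X p.1 p.2‖ ^ 2) := by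
    rw [EuclideanSpace.norm_eq]
    congr 1
  rw [h1, Real.sq_sqrt (Finset.sum_nonneg fun p _ => sq_nonneg _)]
  have h2 : (Xᴴ * X).trace = ∑ j, ∑ i, (starRingEnd ℂ) (X i j) * X i j := by
    have ht : (Xᴴ * X).trace = ∑ j, (Xᴴ * X) j j := rfl
    rw [ht]
    refine Finset.sum_congr rfl fun j _ => ?_
    simp [Matrix.mul_apply, Matrix.conjTranspose_apply]
  have h3 : ∀ (i j : Fin d), ((starRingEnd ℂ) (X i j) * X i j).re = ‖X i j‖ ^ 2 := by
    intro i j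
    rw [Complex.conj_mul', ← Complex.ofReal_pow, Complex.ofReal_re]
  rw [h2, Complex.re_sum]
  simp only [Complex.re_sum, h3]
  rw [Fintype.sum_prod_type]
  exact Finset.sum_comm

lemma traceNorm_eq_sum_singular (X : Matrix (Fin d) (Fin d) ℂ) :
    ∃ s : Fin d → ℝ, (∀ i, 0 ≤ s i) ∧ traceNorm X = ∑ i, s i ∧
      (Xᴴ * X).trace.re = ∑ i, s i ^ 2 := by
  obtain ⟨W, s, hW1, hW2, hs, hS⟩ := psd_udu (sqrtM_psd X)
  refine ⟨s, hs, ?_, ?_⟩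
  · rw [traceNorm_eq, hS, udu_trace hW2, Complex.ofReal_re]
  · have h := sqrtM_sq X
    rw [hS, pow_two, udu_mul hW2] at h
    rw [← h, udu_trace hW2, Complex.ofReal_re]
    congr 1
    funext i
    exact (pow_two (s i)).symm

lemma norm_eucM_le_traceNorm (X : Matrix (Fin d) (Fin d) ℂ) :
    ‖eucM d X‖ ≤ traceNorm X := by
  obtain ⟨s, hs, h1, h2⟩ := traceNorm_eq_sum_singular X
  have hsq : ‖eucM d X‖ ^ 2 ≤ traceNorm X ^ 2 := by
    rw [norm_eucM_sq, h1, h2]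
    exact Finset.sum_sq_le_sq_sum_of_nonneg fun i _ => hs i
  calc ‖eucM d X‖ = Real.sqrt (‖eucM d X‖ ^ 2) := (Real.sqrt_sq (norm_nonneg _)).symm
    _ ≤ Real.sqrt (traceNorm X ^ 2) := Real.sqrt_le_sqrt hsq
    _ = traceNorm X := Real.sqrt_sq (traceNorm_nonneg X)

lemma traceNorm_le_sqrt_mul_norm_eucM (X : Matrix (Fin d) (Fin d) ℂ) :
    traceNorm X ≤ Real.sqrt d * ‖eucM d X‖ := by
  obtain ⟨s, hs, h1, h2⟩ := traceNorm_eq_sum_singular X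
  have hsq : traceNorm X ^ 2 ≤ (d : ℝ) * ‖eucM d X‖ ^ 2 := by
    rw [norm_eucM_sq, h1, h2]
    have := Finset.sum_mul_sq_le_sq_mul_sq Finset.univ (fun _ : Fin d => (1 : ℝ)) s
    simpa [Finset.card_univ] using this
  have h3 : traceNorm X = Real.sqrt (traceNorm X ^ 2) := (Real.sqrt_sq (traceNorm_nonneg X)).symm
  rw [h3]
  calc Real.sqrt (traceNorm X ^ 2) ≤ Real.sqrt ((d : ℝ) * ‖eucM d X‖ ^ 2) := Real.sqrt_le_sqrt hsq
    _ = Real.sqrt d * ‖eucM d X‖ := by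
        rw [Real.sqrt_mul (Nat.cast_nonneg d), Real.sqrt_sq (norm_nonneg _)]

lemma traceNorm_pos {X : Matrix (Fin d) (Fin d) ℂ} (hX : X ≠ 0) : 0 < traceNorm X := by
  have h : eucM d X ≠ 0 := fun h0 => hX ((eucM d).map_eq_zero_iff.mp h0)
  exact lt_of_lt_of_le (norm_pos_iff.mpr h) (norm_eucM_le_traceNorm X)

lemma linear_traceNorm_bound (g : Module.End ℂ (Matrix (Fin d) (Fin d) ℂ)) :
    ∃ C : ℝ, 0 ≤ C ∧ ∀ X, traceNorm (g X) ≤ C * traceNorm X := by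
  set L := LinearMap.toContinuousLinearMap
    (((eucM d).toLinearMap ∘ₗ g) ∘ₗ (eucM d).symm.toLinearMap) with hL
  refine ⟨Real.sqrt d * ‖L‖, by positivity, fun X => ?_⟩
  have hLX : L (eucM d X) = eucM d (g X) := by
    simp [hL, LinearMap.coe_toContinuousLinearMap']
  calc traceNorm (g X) ≤ Real.sqrt d * ‖eucM d (g X)‖ := traceNorm_le_sqrt_mul_norm_eucM _
    _ = Real.sqrt d * ‖L (eucM d X)‖ := by rw [hLX]
    _ ≤ Real.sqrt d * (‖L‖ * ‖eucM d X‖) := by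
        gcongr
        exact L.le_opNorm (eucM d X)
    _ ≤ Real.sqrt d * (‖L‖ * traceNorm X) := by
        gcongr
        exact norm_eucM_le_traceNorm X
    _ = Real.sqrt d * ‖L‖ * traceNorm X := by ring

lemma oneToOneNorm_nonneg (g : Matrix (Fin d) (Fin d) ℂ → Matrix (Fin d) (Fin d) ℂ) :
    0 ≤ oneToOneNorm g := by
  refine Real.sSup_nonneg ?_
  rintro r ⟨X, hX, rfl⟩
  exact div_nonneg (traceNorm_nonneg _) (traceNorm_nonneg _)

lemma traceNorm_apply_le (g : Module.End ℂ (Matrix (Fin d) (Fin d) ℂ))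
    (X : Matrix (Fin d) (Fin d) ℂ) :
    traceNorm (g X) ≤ oneToOneNorm (fun Y => g Y) * traceNorm X := by
  rcases eq_or_ne X 0 with rfl | hX
  · simp only [map_zero, traceNorm_zero, mul_zero, le_refl]
  · obtain ⟨C, hC0, hC⟩ := linear_traceNorm_bound g
    have hbdd : BddAbove {r : ℝ | ∃ Y, Y ≠ 0 ∧ r = traceNorm (g Y) / traceNorm Y} := by
      refine ⟨C, ?_⟩
      rintro r ⟨Y, hY, rfl⟩
      rw [div_le_iff₀ (traceNorm_pos hY)]
      exact hC Y
    have hmem : traceNorm (g X) / traceNorm X ∈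
        {r : ℝ | ∃ Y, Y ≠ 0 ∧ r = traceNorm (g Y) / traceNorm Y} := ⟨X, hX, rfl⟩
    have := le_csSup hbdd hmem
    rw [div_le_iff₀ (traceNorm_pos hX)] at this
    exact this

end StabAux
namespace StabAux

variable {d : ℕ}

open scoped MatrixOrder in
lemma psd_mul_trace_re_nonneg {A B : Matrix (Fin d) (Fin d) ℂ}
    (hA : A.PosSemidef) (hB : B.PosSemidef) : 0 ≤ ((A * B).trace).re := by
  have h1 : A = CFC.sqrt A * CFC.sqrt A := (CFC.sqrt_mul_sqrt_self A (Matrix.nonneg_iff_posSemidef.mpr hA)).symm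
  have h2 : (A * B).trace = (CFC.sqrt A * B * CFC.sqrt A).trace := by
    conv_lhs => rw [h1, Matrix.mul_assoc, Matrix.trace_mul_comm]
  have h3 : (CFC.sqrt A * B * CFC.sqrt A).PosSemidef := by
    have := hB.mul_mul_conjTranspose_same (CFC.sqrt A)
    rwa [(Matrix.nonneg_iff_posSemidef.mp (CFC.sqrt_nonneg A)).1.eq] at this
  rw [h2]
  exact psd_trace_nonneg h3

lemma povm_bound {ι : Type*} [Fintype ι] {Δ : Matrix (Fin d) (Fin d) ℂ} (hΔ : Δ.IsHermitian)
    {F : ι → Matrix (Fin d) (Fin d) ℂ} (hF : ∀ m, (F m).PosSemidef)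
    (hFsum : ∑ m, F m = 1) :
    ∑ m, |((F m * Δ).trace).re| ≤ traceNorm Δ := by
  obtain ⟨W, c, hW1, hW2, hΔeq⟩ := herm_udu hΔ
  set Δp := W * Dg (fun i => max (c i) 0) * Wᴴ with hΔp
  set Δm := W * Dg (fun i => max (-c i) 0) * Wᴴ with hΔm
  have hpsdp : Δp.PosSemidef := udu_psd fun i => le_max_right _ _
  have hpsdm : Δm.PosSemidef := udu_psd fun i => le_max_right _ _
  have hDgsub : Dg (fun i => max (c i) 0) - Dg (fun i => max (-c i) 0) = Dg c := by
    rw [Matrix.diagonal_sub]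
    have : (fun i => ((max (c i) 0 : ℝ) : ℂ) - ((max (-c i) 0 : ℝ) : ℂ)) =
        fun i => ((c i : ℝ) : ℂ) := by
      funext i
      rw [← Complex.ofReal_sub, max_zero_sub_max_neg_zero_eq_self]
    exact congrArg diagonal this
  have hsub : Δ = Δp - Δm := by
    rw [hΔeq, hΔp, hΔm, ← Matrix.sub_mul, ← Matrix.mul_sub, hDgsub]
  have htn : traceNorm Δ = (Δp.trace).re + (Δm.trace).re := by
    rw [hΔeq, udu_traceNorm hW2, hΔp, hΔm, udu_trace hW2, udu_trace hW2,
      Complex.ofReal_re, Complex.ofReal_re, ← Finset.sum_add_distrib]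
    refine Finset.sum_congr rfl fun i _ => ?_
    rcases le_total 0 (c i) with h | h
    · rw [abs_of_nonneg h, max_eq_left h, max_eq_right (neg_nonpos.mpr h), add_zero]
    · rw [abs_of_nonpos h, max_eq_right h, max_eq_left (neg_nonneg.mpr h), zero_add]
  have hterm : ∀ m, |((F m * Δ).trace).re| ≤ ((F m * Δp).trace).re + ((F m * Δm).trace).re := by
    intro m
    have h1 : ((F m * Δ).trace).re = ((F m * Δp).trace).re - ((F m * Δm).trace).re := by
      rw [hsub, Matrix.mul_sub, Matrix.trace_sub, Complex.sub_re]
    have hp := psd_mul_trace_re_nonneg (hF m) hpsdp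
    have hm := psd_mul_trace_re_nonneg (hF m) hpsdm
    rw [h1, abs_le]
    constructor <;> linarith
  calc ∑ m, |((F m * Δ).trace).re|
      ≤ ∑ m, (((F m * Δp).trace).re + ((F m * Δm).trace).re) :=
        Finset.sum_le_sum fun m _ => hterm m
    _ = (Δp.trace).re + (Δm.trace).re := by
        rw [Finset.sum_add_distrib]
        congr 1
        · rw [← Complex.re_sum, ← Matrix.trace_sum, ← Finset.sum_mul, hFsum, Matrix.one_mul]
        · rw [← Complex.re_sum, ← Matrix.trace_sum, ← Finset.sum_mul, hFsum, Matrix.one_mul]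
    _ = traceNorm Δ := htn.symm

section Resolution

/-- vectors as Euclidean space -/
noncomputable abbrev ev {d : ℕ} (x : Fin d → ℂ) : EuclideanSpace ℂ (Fin d) :=
  (WithLp.equiv 2 (Fin d → ℂ)).symm x

lemma ev_inner (x y : Fin d → ℂ) : (inner ℂ (ev x) (ev y) : ℂ) = dotProduct (star x) y :=
  (EuclideanSpace.inner_toLp_toLp x y).trans (dotProduct_comm _ _)

lemma ev_norm_sq (x : Fin d → ℂ) : (‖ev x‖ : ℝ) ^ 2 = (dotProduct (star x) x).re := by
  rw [← ev_inner x x]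
  exact (inner_self_eq_norm_sq (𝕜 := ℂ) (ev x)).symm

lemma dot_sum {d' : ℕ} (x : Fin d → ℂ) (f : Fin d' → (Fin d → ℂ)) :
    dotProduct x (∑ i, f i) = ∑ i, dotProduct x (f i) := by
  simp only [dotProduct, Finset.sum_apply, Finset.mul_sum]
  exact Finset.sum_comm

lemma sum_mulVec' {d' : ℕ} (f : Fin d' → Matrix (Fin d) (Fin d) ℂ) (x : Fin d → ℂ) :
    (∑ i, f i) *ᵥ x = ∑ i, (f i) *ᵥ x := by
  funext k
  simp only [Matrix.mulVec, dotProduct, Finset.sum_apply, Matrix.sum_apply,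
    Finset.sum_mul]
  exact Finset.sum_comm

lemma proj_dot (Pm : Matrix (Fin d) (Fin d) ℂ) (hherm : Pm.IsHermitian) (hproj : Pm * Pm = Pm)
    (x y : Fin d → ℂ) :
    dotProduct (star (Pm *ᵥ x)) (Pm *ᵥ y) = dotProduct (star x) (Pm *ᵥ y) := by
  rw [Matrix.star_mulVec, ← Matrix.dotProduct_mulVec, Matrix.mulVec_mulVec, hherm.eq, hproj]

lemma sum_abs_trace_le {d' : ℕ} (P : Fin d' → Matrix (Fin d) (Fin d) ℂ)
    (hherm : ∀ i, (P i).IsHermitian) (hproj : ∀ i, P i * P i = P i)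
    (hsum : ∑ i, P i = 1) (Y : Matrix (Fin d) (Fin d) ℂ) :
    ∑ i, ‖(P i * Y).trace‖ ≤ traceNorm Y := by
  obtain ⟨W, c, hW1, hW2, hc, hS⟩ :=
    psd_udu (sqrtM_psd Y)
  set v : Fin d → (Fin d → ℂ) := fun j k => W k j with hv
  set w : Fin d → (Fin d → ℂ) := fun j => Y *ᵥ v j with hw
  -- trace as a sum of quadratic forms
  have htrace : ∀ A : Matrix (Fin d) (Fin d) ℂ,
      A.trace = ∑ j, dotProduct (star (v j)) (A *ᵥ v j) := by
    intro A
    have h1 : ∀ j, dotProduct (star (v j)) (A *ᵥ v j) = (Wᴴ * (A * W)) j j := by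
      intro j
      simp only [dotProduct, Matrix.mulVec, Matrix.mul_apply, Matrix.conjTranspose_apply,
        Pi.star_apply, hv, dotProduct]
    have h2 : (∑ j, dotProduct (star (v j)) (A *ᵥ v j)) = (Wᴴ * (A * W)).trace := by
      rw [show (Wᴴ * (A * W)).trace = ∑ j, (Wᴴ * (A * W)) j j from rfl]
      exact Finset.sum_congr rfl fun j _ => h1 j
    rw [h2, Matrix.trace_mul_comm, Matrix.mul_assoc, hW1, Matrix.mul_one]
  -- column orthonormality
  have hvnorm : ∀ j, dotProduct (star (v j)) (v j) = 1 := by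
    intro j
    have h1 : dotProduct (star (v j)) (v j) = (Wᴴ * W) j j := by
      simp only [dotProduct, Matrix.mul_apply, Matrix.conjTranspose_apply, Pi.star_apply, hv]
    rw [h1, hW2, Matrix.one_apply_eq]
  have hevv : ∀ j, ‖ev (v j)‖ = 1 := by
    intro j
    have := ev_norm_sq (v j)
    rw [hvnorm j] at this
    simp only [Complex.one_re] at this
    nlinarith [norm_nonneg (ev (v j))]
  -- S acts diagonally on the columns
  have hmulv : ∀ (e : Fin d → ℝ) (j), (W * Dg e * Wᴴ) *ᵥ v j = ((e j : ℂ)) • v j := by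
    intro e j
    have hvs : v j = W *ᵥ Pi.single j (1 : ℂ) := by
      funext k
      simp [hv, Matrix.mulVec_single]
    rw [hvs]
    have hassoc : (W * Dg e * Wᴴ) *ᵥ (W *ᵥ Pi.single j (1 : ℂ)) =
        (W * Dg e * (Wᴴ * W)) *ᵥ Pi.single j (1 : ℂ) := by
      rw [Matrix.mulVec_mulVec, Matrix.mul_assoc]
    rw [hassoc, hW2, Matrix.mul_one, ← Matrix.mulVec_mulVec]
    have hd1 : Dg e *ᵥ Pi.single j (1 : ℂ) =
        (e j : ℂ) • (Pi.single j (1 : ℂ) : Fin d → ℂ) := by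
      rw [Matrix.mulVec_single]
      funext i
      by_cases h : i = j <;> simp [Matrix.diagonal_apply, h, Pi.single_apply]
    rw [hd1, Matrix.mulVec_smul]
  -- norm of w j
  have hewv : ∀ j, ‖ev (w j)‖ = c j := by
    intro j
    have h1 : dotProduct (star (w j)) (w j) =
        dotProduct (star (v j)) ((Yᴴ * Y) *ᵥ v j) := by
      rw [hw]
      rw [Matrix.star_mulVec, ← Matrix.dotProduct_mulVec, Matrix.mulVec_mulVec]
    have h2 : (Yᴴ * Y) *ᵥ v j = ((c j : ℂ) * (c j : ℂ)) • v j := by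
      have hYY := sqrtM_sq Y
      rw [hS, pow_two, udu_mul hW2] at hYY
      rw [← hYY, hmulv]
      push_cast
      rfl
    have h3 := ev_norm_sq (w j)
    rw [h1, h2] at h3
    have h4 : dotProduct (star (v j)) (((c j : ℂ) * (c j : ℂ)) • v j)
        = ((c j : ℂ) * (c j : ℂ)) := by
      rw [dotProduct_smul, hvnorm j, smul_eq_mul, mul_one]
    rw [h4] at h3
    have h5 : (((c j : ℂ) * (c j : ℂ))).re = c j * c j := by
      rw [← Complex.ofReal_mul, Complex.ofReal_re]
    rw [h5] at h3
    nlinarith [norm_nonneg (ev (w j)), hc j]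
  -- the per-column Cauchy-Schwarz bound
  have hcol : ∀ j, ∑ i, ‖dotProduct (star (v j)) ((P i * Y) *ᵥ v j)‖ ≤ c j := by
    intro j
    set a : Fin d' → ℝ := fun i => ‖ev (P i *ᵥ v j)‖ with ha
    set b : Fin d' → ℝ := fun i => ‖ev (P i *ᵥ w j)‖ with hb
    have hab : ∀ i, ‖dotProduct (star (v j)) ((P i * Y) *ᵥ v j)‖ ≤ a i * b i := by
      intro i
      have h1 : (P i * Y) *ᵥ v j = P i *ᵥ w j := by
        rw [← Matrix.mulVec_mulVec, hw]
      rw [h1, ← proj_dot (P i) (hherm i) (hproj i), ← ev_inner]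
      have := norm_inner_le_norm (𝕜 := ℂ) (ev (P i *ᵥ v j)) (ev (P i *ᵥ w j))
      exact this
    have hsuma : ∑ i, (a i) ^ 2 = 1 := by
      have h1 : ∀ i, (a i) ^ 2 = (dotProduct (star (v j)) (P i *ᵥ v j)).re := by
        intro i
        rw [ha]
        rw [ev_norm_sq, proj_dot (P i) (hherm i) (hproj i)]
      simp only [h1]
      rw [← Complex.re_sum]
      have h2 : (∑ i, dotProduct (star (v j)) (P i *ᵥ v j))
          = dotProduct (star (v j)) ((∑ i, P i) *ᵥ v j) := by
        rw [sum_mulVec', dot_sum]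
      rw [h2, hsum, Matrix.one_mulVec, hvnorm j]
      simp
    have hsumb : ∑ i, (b i) ^ 2 = c j * c j := by
      have h1 : ∀ i, (b i) ^ 2 = (dotProduct (star (w j)) (P i *ᵥ w j)).re := by
        intro i
        rw [hb]
        rw [ev_norm_sq, proj_dot (P i) (hherm i) (hproj i)]
      simp only [h1]
      rw [← Complex.re_sum]
      have h2 : (∑ i, dotProduct (star (w j)) (P i *ᵥ w j))
          = dotProduct (star (w j)) ((∑ i, P i) *ᵥ w j) := by
        rw [sum_mulVec', dot_sum]
      rw [h2, hsum, Matrix.one_mulVec, ← ev_norm_sq, hewv j]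
      ring
    calc ∑ i, ‖dotProduct (star (v j)) ((P i * Y) *ᵥ v j)‖
        ≤ ∑ i, a i * b i := Finset.sum_le_sum fun i _ => hab i
      _ ≤ c j := by
          have hCS := Finset.sum_mul_sq_le_sq_mul_sq Finset.univ a b
          rw [hsuma, hsumb, one_mul] at hCS
          have hnn : 0 ≤ ∑ i, a i * b i :=
            Finset.sum_nonneg fun i _ => mul_nonneg (norm_nonneg _) (norm_nonneg _)
          nlinarith [hc j]
  -- assemble
  have htotal : ∑ i, ‖(P i * Y).trace‖ ≤ ∑ j, c j := by
    calc ∑ i, ‖(P i * Y).trace‖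
        = ∑ i, ‖∑ j, dotProduct (star (v j)) ((P i * Y) *ᵥ v j)‖ := by
          refine Finset.sum_congr rfl fun i _ => ?_
          rw [htrace]
      _ ≤ ∑ i, ∑ j, ‖dotProduct (star (v j)) ((P i * Y) *ᵥ v j)‖ :=
          Finset.sum_le_sum fun i _ => norm_sum_le _ _
      _ = ∑ j, ∑ i, ‖dotProduct (star (v j)) ((P i * Y) *ᵥ v j)‖ :=
          Finset.sum_comm
      _ ≤ ∑ j, c j := Finset.sum_le_sum fun j _ => hcol j
  have htn : traceNorm Y = ∑ j, c j := by
    rw [traceNorm_eq, hS, udu_trace hW2, Complex.ofReal_re]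
  rw [htn]
  exact htotal

end Resolution

end StabAux
namespace StabAux

variable {d : ℕ}

section Pinch

variable {d' : ℕ} (P : Fin d' → Matrix (Fin d) (Fin d) ℂ)

lemma P_psd (hherm : ∀ i, (P i).IsHermitian) (hproj : ∀ i, P i * P i = P i) (i : Fin d') :
    (P i).PosSemidef := by
  have h : (P i)ᴴ * P i = P i := by rw [(hherm i).eq, hproj i]
  exact h ▸ Matrix.posSemidef_conjTranspose_mul_self (P i)

lemma P_trace_pos (hherm : ∀ i, (P i).IsHermitian) (hproj : ∀ i, P i * P i = P i)
    (hne : ∀ i, P i ≠ 0) (i : Fin d') : 0 < ((P i).trace).re := by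
  have h : (P i)ᴴ * P i = P i := by rw [(hherm i).eq, hproj i]
  have h2 : ((P i).trace).re = ‖eucM d (P i)‖ ^ 2 := by
    conv_lhs => rw [← h]
    rw [← norm_eucM_sq]
  rw [h2]
  have h3 : eucM d (P i) ≠ 0 := fun h0 => hne i ((eucM d).map_eq_zero_iff.mp h0)
  exact pow_pos (norm_pos_iff.mpr h3) 2

lemma P_trace_ne (hherm : ∀ i, (P i).IsHermitian) (hproj : ∀ i, P i * P i = P i)
    (hne : ∀ i, P i ≠ 0) (i : Fin d') : ((P i).trace) ≠ 0 := by
  intro h0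
  have := P_trace_pos P hherm hproj hne i
  rw [h0] at this
  simp at this

lemma q_le (hherm : ∀ i, (P i).IsHermitian) (hproj : ∀ i, P i * P i = P i)
    (hne : ∀ i, P i ≠ 0) (horth : ∀ i j, i ≠ j → P i * P j = 0)
    (hsum : ∑ i, P i = 1) (Y : Matrix (Fin d) (Fin d) ℂ) :
    traceNorm (∑ i, ((P i * Y).trace / (P i).trace) • P i) ≤ traceNorm Y := by
  set c : Fin d' → ℂ := fun i => (P i * Y).trace / (P i).trace with hcdef
  set N := ∑ i, c i • P i with hN
  have hPpsd := P_psd P hherm hproj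
  have hprod : ∀ (a b : Fin d' → ℂ), (∑ i, a i • P i) * (∑ j, b j • P j)
      = ∑ i, (a i * b i) • P i := by
    intro a b
    rw [Finset.sum_mul_sum]
    refine Finset.sum_congr rfl fun i _ => ?_
    rw [Finset.sum_eq_single i (fun j _ hji => by
        rw [Matrix.smul_mul, Matrix.mul_smul, horth i j (fun h => hji h.symm), smul_zero,
          smul_zero])
      (fun h => absurd (Finset.mem_univ i) h)]
    rw [Matrix.smul_mul, Matrix.mul_smul, hproj i, smul_smul]
  have hNH : Nᴴ = ∑ i, (starRingEnd ℂ) (c i) • P i := by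
    rw [hN, Matrix.conjTranspose_sum]
    refine Finset.sum_congr rfl fun i _ => ?_
    rw [Matrix.conjTranspose_smul, (hherm i).eq]
    rfl
  have hB2 : (∑ i, ((‖c i‖ : ℂ)) • P i) ^ 2 = Nᴴ * N := by
    rw [pow_two, hprod, hNH, hN, hprod]
    refine Finset.sum_congr rfl fun i _ => ?_
    congr 1
    rw [Complex.conj_mul', sq]
  have hBpsd : (∑ i, ((‖c i‖ : ℂ)) • P i).PosSemidef := by
    refine Matrix.PosSemidef.of_dotProduct_mulVec_nonneg ?_ ?_
    · show _ᴴ = _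
      rw [Matrix.conjTranspose_sum]
      refine Finset.sum_congr rfl fun i _ => ?_
      rw [Matrix.conjTranspose_smul, (hherm i).eq]
      congr 1
      exact Complex.conj_ofReal _
    · intro x
      rw [sum_mulVec', dot_sum]
      refine Finset.sum_nonneg fun i _ => ?_
      rw [Matrix.smul_mulVec, dotProduct_smul, smul_eq_mul]
      exact mul_nonneg (Complex.zero_le_real.mpr (norm_nonneg _)) ((hPpsd i).dotProduct_mulVec_nonneg x)
  have heq := eq_sqrtM hBpsd hB2
  have htrN : traceNorm N = ∑ i, ‖(P i * Y).trace‖ := by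
    rw [traceNorm_eq, ← heq, Matrix.trace_sum, Complex.re_sum]
    refine Finset.sum_congr rfl fun i _ => ?_
    rw [Matrix.trace_smul, smul_eq_mul, herm_trace_re (hherm i), ← Complex.ofReal_mul,
      Complex.ofReal_re, hcdef]
    have ht := P_trace_pos P hherm hproj hne i
    rw [norm_div, herm_trace_re (hherm i), Complex.norm_real, Real.norm_eq_abs, abs_of_pos ht]
    rw [Complex.ofReal_re]
    exact div_mul_cancel₀ _ (ne_of_gt ht)
  calc traceNorm N = ∑ i, ‖(P i * Y).trace‖ := htrN
    _ ≤ traceNorm Y := sum_abs_trace_le P hherm hproj hsum Y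

end Pinch

section Gibbs

lemma gibbs_psd_trace_one (hd : 0 < d) {A : Matrix (Fin d) (Fin d) ℂ} (hA : A.IsHermitian) :
    (((NormedSpace.exp A).trace)⁻¹ • NormedSpace.exp A).PosSemidef ∧
    (((NormedSpace.exp A).trace)⁻¹ • NormedSpace.exp A).trace = 1 := by
  obtain ⟨W, c, hW1, hW2, hAeq⟩ := herm_udu hA
  have hU : IsUnit W := ⟨⟨W, Wᴴ, hW1, hW2⟩, rfl⟩
  have hWinv : W⁻¹ = Wᴴ := Matrix.inv_eq_right_inv hW1
  have hexp : NormedSpace.exp A = W * Dg (fun i => Real.exp (c i)) * Wᴴ := by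
    rw [hAeq, ← hWinv, Matrix.exp_conj W (Dg c) hU, hWinv]
    congr 2
    rw [Matrix.exp_diagonal]
    have hfun : (NormedSpace.exp fun i => ((c i : ℝ) : ℂ)) = fun i => ((Real.exp (c i) : ℝ) : ℂ) := by
      funext i
      rw [Pi.coe_exp, ← Complex.exp_eq_exp_ℂ, ← Complex.ofReal_exp]
    rw [hfun]
  set Z : ℝ := ∑ i, Real.exp (c i) with hZ
  have hZpos : 0 < Z := by
    rw [hZ]
    have : Nonempty (Fin d) := ⟨⟨0, hd⟩⟩
    exact Finset.sum_pos (fun i _ => Real.exp_pos _) Finset.univ_nonempty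
  have htr : (NormedSpace.exp A).trace = (Z : ℂ) := by
    rw [hexp, udu_trace hW2]
  have hsm : ((NormedSpace.exp A).trace)⁻¹ • NormedSpace.exp A
      = W * Dg (fun i => Z⁻¹ * Real.exp (c i)) * Wᴴ := by
    rw [htr, hexp, ← Complex.ofReal_inv]
    have h1 : W * (((Z⁻¹ : ℝ) : ℂ) • Dg (fun i => Real.exp (c i))) * Wᴴ
        = ((Z⁻¹ : ℝ) : ℂ) • (W * Dg (fun i => Real.exp (c i)) * Wᴴ) := by
      rw [Matrix.mul_smul, Matrix.smul_mul]
    rw [← h1]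
    congr 2
    funext i j
    rw [Matrix.smul_apply]
    by_cases hij : i = j
    · subst hij
      simp only [Dg, Matrix.diagonal_apply_eq, smul_eq_mul]
      push_cast
      ring
    · simp only [Dg, Matrix.diagonal_apply_ne _ hij, smul_zero]
  constructor
  · rw [hsm]
    exact udu_psd fun i => mul_nonneg (inv_nonneg.mpr hZpos.le) (Real.exp_pos _).le
  · rw [hsm, udu_trace hW2, ← Finset.mul_sum, ← hZ, inv_mul_cancel₀ (ne_of_gt hZpos)]
    exact Complex.ofReal_one

end Gibbs

end StabAux
open StabAux in
/-- **Stability of perfect sampling under perturbation of the channel.** With `σ` the Gibbs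
state of `H = ∑ E i • P i`, `Q` the pinching-average channel, `T∞(X) = Tr(X) σ`, and
trace-preserving linear maps `T, T'` with `T σ = σ`, `Q∘T∘Q = T∘Q`, `‖T - T∞‖₁→₁ < 1`,
`‖T - T'‖₁→₁ ≤ ε`, any density matrix `ρ` fixed by `Q∘T'∘Q` satisfies, for every POVM `F`,
`∑ m |Tr(F m σ) - Tr(F m ρ)| ≤ (κ(T) + 2) ε`, where
`κ(T) = sup { ‖(id - T + T∞)⁻¹ X‖₁ / ‖X‖₁ : X ≠ 0, Tr X = 0 }`. -/
theorem stability_of_sampling_under_channel_perturbation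
    {d d' : ℕ} (P : Fin d' → Matrix (Fin d) (Fin d) ℂ)
    (hherm : ∀ i, (P i).IsHermitian)
    (hproj : ∀ i, P i * P i = P i)
    (hne : ∀ i, P i ≠ 0)
    (horth : ∀ i j, i ≠ j → P i * P j = 0)
    (hsum : ∑ i, P i = 1)
    (E : Fin d' → ℝ) (β : ℝ) (hβ : 0 < β)
    (H : Matrix (Fin d) (Fin d) ℂ) (hH : H = ∑ i, (E i : ℂ) • P i)
    (σ : Matrix (Fin d) (Fin d) ℂ)
    (hσ : σ = ((NormedSpace.exp (-(β : ℂ) • H)).trace)⁻¹ • NormedSpace.exp (-(β : ℂ) • H))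
    (Q : Matrix (Fin d) (Fin d) ℂ → Matrix (Fin d) (Fin d) ℂ)
    (hQ : ∀ X, Q X = ∑ i, ((P i * X).trace / (P i).trace) • P i)
    (T T' Tinf : Module.End ℂ (Matrix (Fin d) (Fin d) ℂ))
    (hTinf : ∀ X, Tinf X = X.trace • σ)
    (hTtrace : ∀ X, (T X).trace = X.trace)
    (hT'trace : ∀ X, (T' X).trace = X.trace)
    (hTfix : T σ = σ)
    (hQTQ : ∀ X, Q (T (Q X)) = T (Q X))
    (hprim : oneToOneNorm (fun X => T X - Tinf X) < 1)
    (ε : ℝ) (hclose : oneToOneNorm (fun X => T X - T' X) ≤ ε)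
    (κ : ℝ)
    (hκ : κ = sSup {r : ℝ | ∃ X, X ≠ 0 ∧ X.trace = 0 ∧
      r = traceNorm ((Ring.inverse (1 - T + Tinf)) X) / traceNorm X})
    (ρ : Matrix (Fin d) (Fin d) ℂ)
    (hρ : ρ.PosSemidef) (hρtrace : ρ.trace = 1)
    (hρfix : Q (T' (Q ρ)) = ρ)
    {ι : Type*} [Fintype ι] (F : ι → Matrix (Fin d) (Fin d) ℂ)
    (hF : ∀ m, (F m).PosSemidef) (hFsum : ∑ m, F m = 1) :
    ∑ m, |((F m * σ).trace).re - ((F m * ρ).trace).re| ≤ (κ + 2) * ε := by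
  have hε : 0 ≤ ε := le_trans (oneToOneNorm_nonneg _) hclose
  have hκ0 : 0 ≤ κ := by
    rw [hκ]
    refine Real.sSup_nonneg ?_
    rintro r ⟨X, hX, hXtr, rfl⟩
    exact div_nonneg (traceNorm_nonneg _) (traceNorm_nonneg _)
  rcases Nat.eq_zero_or_pos d with hd | hd
  · subst hd
    have hz : ∀ A : Matrix (Fin 0) (Fin 0) ℂ, A.trace = 0 := fun A => by
      simp [Matrix.trace]
    calc ∑ m, |((F m * σ).trace).re - ((F m * ρ).trace).re| = 0 := by
          refine Finset.sum_eq_zero fun m _ => ?_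
          rw [hz, hz]
          simp
      _ ≤ (κ + 2) * ε := by positivity
  -- main case
  have hHherm : H.IsHermitian := by
    rw [hH]
    show _ᴴ = _
    rw [Matrix.conjTranspose_sum]
    refine Finset.sum_congr rfl fun i _ => ?_
    rw [Matrix.conjTranspose_smul, (hherm i).eq]
    congr 1
    exact Complex.conj_ofReal _
  have hMherm : ((-(β : ℂ)) • H).IsHermitian := by
    show _ᴴ = _
    rw [Matrix.conjTranspose_smul, hHherm.eq]
    congr 1
    rw [star_neg]
    congr 1
    exact Complex.conj_ofReal _
  have hgibbs := gibbs_psd_trace_one hd hMherm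
  have hσpsd : σ.PosSemidef := by rw [hσ]; exact hgibbs.1
  have hσtr : σ.trace = 1 := by rw [hσ]; exact hgibbs.2
  set Δ := σ - ρ with hΔ
  have hΔtr : Δ.trace = 0 := by rw [hΔ, Matrix.trace_sub, hσtr, hρtrace, sub_self]
  -- basic Q facts
  have hPtr := P_trace_ne P hherm hproj hne
  have hQtr : ∀ X, (Q X).trace = X.trace := by
    intro X
    rw [hQ X, Matrix.trace_sum]
    have h1 : ∀ i, (((P i * X).trace / (P i).trace) • P i).trace = (P i * X).trace := by
      intro i
      rw [Matrix.trace_smul, smul_eq_mul, div_mul_cancel₀ _ (hPtr i)]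
    rw [Finset.sum_congr rfl fun i _ => h1 i]
    calc ∑ i, (P i * X).trace = (∑ i, P i * X).trace := (Matrix.trace_sum _ _).symm
      _ = ((∑ i, P i) * X).trace := by rw [Finset.sum_mul]
      _ = X.trace := by rw [hsum, Matrix.one_mul]
  have hQP : ∀ (i : Fin d') X, (P i * Q X).trace = (P i * X).trace := by
    intro i X
    rw [hQ X, Finset.mul_sum]
    have h1 : ∀ j, j ∈ Finset.univ → j ≠ i →
        P i * (((P j * X).trace / (P j).trace) • P j) = 0 := by
      intro j _ hji
      rw [Matrix.mul_smul, horth i j (fun h => hji h.symm), smul_zero]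
    rw [Finset.sum_eq_single i h1 (fun h => absurd (Finset.mem_univ i) h)]
    rw [Matrix.mul_smul, hproj i, Matrix.trace_smul, smul_eq_mul,
      div_mul_cancel₀ _ (hPtr i)]
  have hQQ : ∀ X, Q (Q X) = Q X := by
    intro X
    rw [hQ (Q X)]
    conv_rhs => rw [hQ X]
    exact Finset.sum_congr rfl fun i _ => by rw [hQP i X]
  have hQρ : Q ρ = ρ := by
    conv_lhs => rw [← hρfix]
    rw [hQQ, hρfix]
  have hQsub : ∀ X X', Q X - Q X' = Q (X - X') := by
    intro X X'
    rw [hQ X, hQ X', hQ (X - X'), ← Finset.sum_sub_distrib]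
    refine Finset.sum_congr rfl fun i _ => ?_
    rw [← sub_smul]
    congr 1
    rw [Matrix.mul_sub, Matrix.trace_sub, sub_div]
  -- invertibility of 1 - T + Tinf
  have hRunit : IsUnit (1 - T + Tinf) := by
    rw [LinearMap.isUnit_iff_ker_eq_bot]
    rw [LinearMap.ker_eq_bot']
    intro X hX
    by_contra hX0
    have h1 : X = (T - Tinf) X := by
      have h2 : X - T X + Tinf X = 0 := by
        have := hX
        simpa [LinearMap.add_apply, LinearMap.sub_apply, Module.End.one_apply] using this
      have h3 : X - (T X - Tinf X) = 0 := by
        rw [show X - (T X - Tinf X) = X - T X + Tinf X from by abel]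
        exact h2
      rw [LinearMap.sub_apply]
      exact sub_eq_zero.mp h3
    have h4 : traceNorm X ≤ oneToOneNorm (fun Y => (T - Tinf) Y) * traceNorm X := by
      conv_lhs => rw [h1]
      exact traceNorm_apply_le (T - Tinf) X
    have h5 : oneToOneNorm (fun Y => (T - Tinf) Y) < 1 := by
      have h6 : (fun X => T X - Tinf X) =
          fun Y : Matrix (Fin d) (Fin d) ℂ => (T - Tinf) Y := by
        funext Y
        rw [LinearMap.sub_apply]
      rw [← h6]
      exact hprim
    have h7 := traceNorm_pos hX0
    nlinarith [oneToOneNorm_nonneg (fun Y : Matrix (Fin d) (Fin d) ℂ => (T - Tinf) Y)]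
  -- the key identity
  set Yv := T ρ - T' ρ with hYv
  have hkey : (1 - T + Tinf) Δ = Q Yv := by
    have h1 : (1 - T + Tinf) Δ = Δ - T Δ + Tinf Δ := by
      simp [LinearMap.add_apply, LinearMap.sub_apply, Module.End.one_apply]
    have h2 : Tinf Δ = 0 := by rw [hTinf, hΔtr, zero_smul]
    have h3 : T Δ = σ - T ρ := by rw [hΔ, map_sub, hTfix]
    have h4 : (1 - T + Tinf) Δ = T ρ - ρ := by
      rw [h1, h2, h3, hΔ]
      abel
    have h9 : Q (T ρ) = T ρ := by
      have h9' := hQTQ ρ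
      rw [hQρ] at h9'
      exact h9'
    have h8 : Q (T' ρ) = ρ := by
      conv_lhs => rw [← hQρ]
      exact hρfix
    rw [h4, hYv, ← hQsub, h9, h8]
  have hΔeq : Δ = (Ring.inverse (1 - T + Tinf)) (Q Yv) := by
    rw [← hkey]
    have h7 : Ring.inverse (1 - T + Tinf) * (1 - T + Tinf) = 1 :=
      Ring.inverse_mul_cancel _ hRunit
    calc Δ = (Ring.inverse (1 - T + Tinf) * (1 - T + Tinf)) Δ := by
          rw [h7, Module.End.one_apply]
      _ = (Ring.inverse (1 - T + Tinf)) ((1 - T + Tinf) Δ) := by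
          rw [Module.End.mul_apply]
  have hYtr : Yv.trace = 0 := by
    rw [hYv, Matrix.trace_sub, hTtrace, hT'trace, sub_self]
  have hQYtr : (Q Yv).trace = 0 := by rw [hQtr, hYtr]
  -- κ bound
  have hκb : traceNorm Δ ≤ κ * traceNorm (Q Yv) := by
    rcases eq_or_ne (Q Yv) 0 with h0 | h0
    · rw [hΔeq, h0, map_zero, traceNorm_zero]
      simp
    · obtain ⟨C, hC0, hC⟩ := linear_traceNorm_bound (Ring.inverse (1 - T + Tinf))
      have hbdd : BddAbove {r : ℝ | ∃ X, X ≠ 0 ∧ X.trace = 0 ∧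
          r = traceNorm ((Ring.inverse (1 - T + Tinf)) X) / traceNorm X} := by
        refine ⟨C, ?_⟩
        rintro r ⟨X, hX, _, rfl⟩
        rw [div_le_iff₀ (traceNorm_pos hX)]
        exact hC X
      have hmem : traceNorm ((Ring.inverse (1 - T + Tinf)) (Q Yv)) / traceNorm (Q Yv) ∈
          {r : ℝ | ∃ X, X ≠ 0 ∧ X.trace = 0 ∧
            r = traceNorm ((Ring.inverse (1 - T + Tinf)) X) / traceNorm X} :=
        ⟨Q Yv, h0, hQYtr, rfl⟩
      have hle := le_csSup hbdd hmem
      rw [div_le_iff₀ (traceNorm_pos h0)] at hle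
      rw [hΔeq, hκ]
      exact hle
  -- Q contraction
  have hQle : traceNorm (Q Yv) ≤ traceNorm Yv := by
    rw [hQ Yv]
    exact q_le P hherm hproj hne horth hsum Yv
  -- closeness
  have hρ1 : traceNorm ρ = 1 := by
    rw [traceNorm_psd hρ, hρtrace, Complex.one_re]
  have hYb : traceNorm Yv ≤ ε := by
    have h1 : traceNorm ((T - T') ρ) ≤ oneToOneNorm (fun Y => (T - T') Y) * traceNorm ρ :=
      traceNorm_apply_le (T - T') ρ
    have h2 : (fun X => T X - T' X) =
        fun Y : Matrix (Fin d) (Fin d) ℂ => (T - T') Y := by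
      funext X
      rw [LinearMap.sub_apply]
    rw [← h2, hρ1, mul_one] at h1
    have h3 : Yv = (T - T') ρ := by rw [hYv, LinearMap.sub_apply]
    rw [h3]
    exact le_trans h1 hclose
  -- POVM bound
  have hΔherm : Δ.IsHermitian := hσpsd.1.sub hρ.1
  have hfinal : ∑ m, |((F m * Δ).trace).re| ≤ traceNorm Δ := povm_bound hΔherm hF hFsum
  calc ∑ m, |((F m * σ).trace).re - ((F m * ρ).trace).re|
      = ∑ m, |((F m * Δ).trace).re| := by
        refine Finset.sum_congr rfl fun m _ => ?_
        rw [hΔ, Matrix.mul_sub, Matrix.trace_sub, Complex.sub_re]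
    _ ≤ traceNorm Δ := hfinal
    _ ≤ κ * traceNorm (Q Yv) := hκb
    _ ≤ κ * traceNorm Yv := mul_le_mul_of_nonneg_left hQle hκ0
    _ ≤ κ * ε := mul_le_mul_of_nonneg_left hYb hκ0
    _ ≤ (κ + 2) * ε := by nlinarith
end

section
/- Let A be a unital Banach algebra whose unit has norm 1, and let a, q ∈ A satisfy: q² = q, ‖q‖ ≤ 1, q·a·q = a·q, and ‖a‖ < 1. Then 1 − a and 1 − q·a·q are invertible, and (1 − q·a·q)⁻¹ = 1 − q + q·(1 − a)⁻¹·q. -/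
/-- **Neumann-series identity for the pinched resolvent.** In a unital Banach algebra with
`‖1‖ = 1`, if `q` is an idempotent of norm at most `1` with `q·a·q = a·q` and `‖a‖ < 1`, then
`1 - a` and `1 - q·a·q` are invertible and
`(1 - q·a·q)⁻¹ = 1 - q + q·(1 - a)⁻¹·q`. -/
theorem pinched_resolvent_identity
    {A : Type*} [NormedRing A] [NormOneClass A] [CompleteSpace A]
    (a q : A) (hq : q * q = q) (hqnorm : ‖q‖ ≤ 1)
    (hcomm : q * a * q = a * q) (ha : ‖a‖ < 1) :
    IsUnit (1 - a) ∧ IsUnit (1 - q * a * q) ∧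
      Ring.inverse (1 - q * a * q) = 1 - q + q * Ring.inverse (1 - a) * q := by
  have ha' : IsUnit (1 - a) := (Units.oneSub a ha).isUnit
  have haq : ‖a * q‖ < 1 :=
    lt_of_le_of_lt (le_trans (norm_mul_le _ _)
      (by nlinarith [norm_nonneg a, norm_nonneg q])) ha
  have hq' : IsUnit (1 - q * a * q) := by
    rw [hcomm]; exact (Units.oneSub _ haq).isUnit
  set b := Ring.inverse (1 - a) with hbdef
  have hb1 : b * (1 - a) = 1 := Ring.inverse_mul_cancel _ ha'
  have key : (1 - q + q * b * q) * (1 - q * a * q) = 1 := by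
    have e1 : (1 - q + q * b * q) * (1 - q * a * q)
        = 1 - q * a * q - q + q * (q * a * q) + q * b * q - q * b * (q * (q * a * q)) := by
      noncomm_ring
    rw [e1, hcomm]
    have e2 : q * (a * q) = a * q := by rw [← mul_assoc, hcomm]
    rw [e2]
    have e3 : q * b * q - q * b * (a * q) = q := by
      have : q * (b * (1 - a)) * q = q := by rw [hb1, mul_one, hq]
      calc q * b * q - q * b * (a * q) = q * (b * (1 - a)) * q := by noncomm_ring
        _ = q := this
    calc 1 - a * q - q + a * q + q * b * q - q * b * (a * q)
        = 1 - q + (q * b * q - q * b * (a * q)) := by noncomm_ring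
      _ = 1 := by rw [e3]; noncomm_ring
  refine ⟨ha', hq', ?_⟩
  obtain ⟨u, hu⟩ := hq'
  rw [← hu, Ring.inverse_unit]
  exact Units.inv_eq_of_mul_eq_one_left (by rw [hu]; exact key)
end

section
/- Let A be a unital Banach algebra whose unit has norm 1, and let a, q ∈ A satisfy: q² = q, ‖q‖ ≤ 1, q·a·q = a·q, and ‖a‖ < 1. Then ‖(1 − q·a·q)⁻¹‖ ≤ 2 + ‖(1 − a)⁻¹‖. -/
/-- **Norm bound for the pinched resolvent** (the inequality `κ(QTQ) ≤ 2 + κ(T)`).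
In a unital Banach algebra with `‖1‖ = 1`, if `q` is an idempotent of norm at most `1` with
`q·a·q = a·q` and `‖a‖ < 1`, then `‖(1 - q·a·q)⁻¹‖ ≤ 2 + ‖(1 - a)⁻¹‖`. -/
theorem pinched_resolvent_norm_bound
    {A : Type*} [NormedRing A] [NormOneClass A] [CompleteSpace A]
    (a q : A) (hq : q * q = q) (hqnorm : ‖q‖ ≤ 1)
    (hcomm : q * a * q = a * q) (ha : ‖a‖ < 1) :
    ‖Ring.inverse (1 - q * a * q)‖ ≤ 2 + ‖Ring.inverse (1 - a)‖ := by
  set u := Ring.inverse (1 - a) with hu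
  have haU : IsUnit (1 - a) := (Units.oneSub a ha).isUnit
  have hqaq : ‖q * a * q‖ < 1 := by
    calc ‖q * a * q‖ ≤ ‖q‖ * ‖a‖ * ‖q‖ := by
          exact le_trans (norm_mul_le _ _) (by gcongr; exact norm_mul_le _ _)
      _ ≤ 1 * ‖a‖ * 1 := by gcongr
      _ = ‖a‖ := by ring
      _ < 1 := ha
  have hbU : IsUnit (1 - q * a * q) := (Units.oneSub _ hqaq).isUnit
  have huL : u * (1 - a) = 1 := Ring.inverse_mul_cancel _ haU
  have key : (1 - q + q * u * q) * (1 - q * a * q) = 1 := by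
    have h1 : q * u * q * (q * a * q) = q * u * a * q := by
      calc q * u * q * (q * a * q) = q * u * (q * q * a * q) := by noncomm_ring
        _ = q * u * (q * a * q) := by rw [hq]
        _ = q * u * (a * q) := by rw [hcomm]
        _ = q * u * a * q := by noncomm_ring
    have h2 : q * (q * a * q) = q * a * q := by
      calc q * (q * a * q) = q * q * a * q := by noncomm_ring
        _ = q * a * q := by rw [hq]
    have h3 : q * u * q - q * u * a * q = q := by
      calc q * u * q - q * u * a * q = q * (u * (1 - a)) * q := by noncomm_ring
        _ = q * 1 * q := by rw [huL]
        _ = q := by rw [mul_one, hq]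
    calc (1 - q + q * u * q) * (1 - q * a * q)
        = 1 - (q * a * q) - q + q * (q * a * q) + q * u * q - q * u * q * (q * a * q) := by
          noncomm_ring
      _ = 1 - (q * a * q) - q + (q * a * q) + (q * u * q - q * u * a * q) := by
          rw [h1, h2]; abel
      _ = 1 - q + q := by rw [h3]; abel
      _ = 1 := by abel
  have hinv : Ring.inverse (1 - q * a * q) = 1 - q + q * u * q := by
    have h5 : (1 - q + q * u * q) * ↑hbU.unit = 1 := by rw [hbU.unit_spec]; exact key
    rw [← hbU.unit_spec, Ring.inverse_unit]
    exact (Units.inv_eq_of_mul_eq_one_left h5)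
  rw [hinv]
  have h4 : ‖1 - q + q * u * q‖ ≤ ‖(1 : A)‖ + ‖q‖ + ‖q‖ * ‖u‖ * ‖q‖ := by
    calc ‖1 - q + q * u * q‖ ≤ ‖1 - q‖ + ‖q * u * q‖ := norm_add_le _ _
      _ ≤ (‖(1 : A)‖ + ‖q‖) + ‖q‖ * ‖u‖ * ‖q‖ := by
          gcongr
          · exact norm_sub_le _ _
          · exact le_trans (norm_mul_le _ _) (by gcongr; exact norm_mul_le _ _)
      _ = _ := by ring
  refine h4.trans ?_
  have hun : (0:ℝ) ≤ ‖u‖ := norm_nonneg _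
  calc ‖(1 : A)‖ + ‖q‖ + ‖q‖ * ‖u‖ * ‖q‖ ≤ 1 + 1 + 1 * ‖u‖ * 1 := by
        rw [norm_one]; gcongr
    _ = 2 + ‖u‖ := by ring
end
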